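/- arXiv:1902.06401 — 2 statements merged into one kernel-verified Lean document; each statement's English description precedes it below -/
import Mathlib

section
/- For every positive integer k, the maximum length of a chain of nonempty faces of the cone S₊^k of k×k real symmetric positive semidefinite matrices equals k + 1; that is, ℓ(S₊^k) = k + 1. -/
open Matrix

/-- A face of a convex cone. -/
def IsFace {E : Type*} [AddCommGroup E] [Module ℝ E] (K F : Set E) : Prop :=
  F ⊆ K ∧ Convex ℝ F ∧
    ∀ ⦃x⦄, x ∈ K → ∀ ⦃y⦄, y ∈ K → ∀ ⦃α : ℝ⦄, 0 < α → α < 1 →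
      α • x + (1 - α) • y ∈ F → x ∈ F ∧ y ∈ F

/-- `IsFaceChain K l F` says `F` is a chain `F 0 ⊊ F 1 ⊊ ⋯` of `l` nonempty faces of `K`. -/
def IsFaceChain {E : Type*} [AddCommGroup E] [Module ℝ E] (K : Set E) (l : ℕ)
    (F : Fin l → Set E) : Prop :=
  (∀ i, IsFace K (F i) ∧ (F i).Nonempty) ∧ ∀ i j : Fin l, i < j → F i ⊂ F j


theorem factor_of_ker_le {K V V₂ V₃ : Type*} [Field K] [AddCommGroup V] [Module K V]
    [AddCommGroup V₂] [Module K V₂] [AddCommGroup V₃] [Module K V₃]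
    (f : V →ₗ[K] V₂) (g : V →ₗ[K] V₃) (h : LinearMap.ker f ≤ LinearMap.ker g) :
    ∃ M : V₂ →ₗ[K] V₃, ∀ x, M (f x) = g x := by
  set Tq := (LinearMap.ker f).liftQ g h with hTq
  set e := f.quotKerEquivRange with he
  obtain ⟨M, hM⟩ := LinearMap.exists_extend (Tq ∘ₗ (e.symm.toLinearMap))
  refine ⟨M, fun x => ?_⟩
  have h1 : f x = (LinearMap.range f).subtype ⟨f x, LinearMap.mem_range_self f x⟩ := rfl
  rw [h1, ← LinearMap.comp_apply, hM]
  simp only [LinearMap.comp_apply, LinearEquiv.coe_coe]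
  rw [he, LinearMap.quotKerEquivRange_symm_apply_image f x]
  exact Submodule.liftQ_apply _ _ _

theorem exists_bound_dotProduct {k : ℕ} (M : (Fin k → ℝ) →ₗ[ℝ] (Fin k → ℝ)) :
    ∃ c : ℝ, 0 ≤ c ∧ ∀ v : Fin k → ℝ, (M v) ⬝ᵥ (M v) ≤ c * (v ⬝ᵥ v) := by
  set eq := (WithLp.linearEquiv 2 ℝ (Fin k → ℝ)) with heq
  set M' : EuclideanSpace ℝ (Fin k) →ₗ[ℝ] EuclideanSpace ℝ (Fin k) :=
    eq.symm.toLinearMap ∘ₗ M ∘ₗ eq.toLinearMap with hM'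
  set T := LinearMap.toContinuousLinearMap M' with hT
  refine ⟨‖T‖ ^ 2, by positivity, fun v => ?_⟩
  have hdot : ∀ w : Fin k → ℝ, w ⬝ᵥ w = ‖(eq.symm w : EuclideanSpace ℝ (Fin k))‖ ^ 2 := by
    intro w
    rw [EuclideanSpace.norm_eq]
    rw [Real.sq_sqrt (by positivity)]
    simp [dotProduct, Real.norm_eq_abs, sq_abs, sq]
    rfl
  have key : M v = eq (T (eq.symm v)) := by
    simp [hT, hM', heq]
  rw [key, hdot, hdot]
  have h1 : ‖T (eq.symm v)‖ ≤ ‖T‖ * ‖(eq.symm v : EuclideanSpace ℝ (Fin k))‖ :=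
    T.le_opNorm _
  have h2 : (0:ℝ) ≤ ‖T (eq.symm v)‖ := norm_nonneg _
  calc ‖(eq.symm (eq (T (eq.symm v))) : EuclideanSpace ℝ (Fin k))‖ ^ 2
      = ‖T (eq.symm v)‖ ^ 2 := by rw [LinearEquiv.symm_apply_apply]
    _ ≤ (‖T‖ * ‖(eq.symm v : EuclideanSpace ℝ (Fin k))‖) ^ 2 := by
        apply sq_le_sq' <;> nlinarith [norm_nonneg T, norm_nonneg (eq.symm v : EuclideanSpace ℝ (Fin k))]
    _ = ‖T‖ ^ 2 * ‖(eq.symm v : EuclideanSpace ℝ (Fin k))‖ ^ 2 := by ring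

section PSD
variable {k : ℕ}

open scoped MatrixOrder in
noncomputable def Matrix.PosSemidef.sqrt {A : Matrix (Fin k) (Fin k) ℝ} (_hA : A.PosSemidef) :
    Matrix (Fin k) (Fin k) ℝ := CFC.sqrt A

open scoped MatrixOrder in
theorem Matrix.PosSemidef.sqrt_mul_self {A : Matrix (Fin k) (Fin k) ℝ} (hA : A.PosSemidef) :
    hA.sqrt * hA.sqrt = A := CFC.sqrt_mul_sqrt_self A hA.nonneg

open scoped MatrixOrder in
theorem Matrix.PosSemidef.posSemidef_sqrt {A : Matrix (Fin k) (Fin k) ℝ} (hA : A.PosSemidef) :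
    hA.sqrt.PosSemidef := (CFC.sqrt_nonneg A).posSemidef

theorem psd_smul {A : Matrix (Fin k) (Fin k) ℝ} (hA : A.PosSemidef) {c : ℝ} (hc : 0 ≤ c) :
    (c • A).PosSemidef := by
  constructor
  · unfold Matrix.IsHermitian
    rw [Matrix.conjTranspose_smul, hA.1]
    congr 1
  · intro x
    exact (hA.smul hc).2 x

theorem psd_quadform_sqrt {A : Matrix (Fin k) (Fin k) ℝ} (hA : A.PosSemidef) (x : Fin k → ℝ) :
    x ⬝ᵥ A *ᵥ x = (hA.sqrt *ᵥ x) ⬝ᵥ (hA.sqrt *ᵥ x) := by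
  conv_lhs => rw [← hA.sqrt_mul_self]
  rw [← Matrix.mulVec_mulVec, Matrix.dotProduct_mulVec]
  have hsymm : hA.sqrt.transpose = hA.sqrt := by
    have := hA.posSemidef_sqrt.1
    rwa [Matrix.IsHermitian, Matrix.conjTranspose_eq_transpose_of_trivial] at this
  have h2 : x ᵥ* hA.sqrt = hA.sqrt *ᵥ x := by rw [← Matrix.vecMul_transpose, hsymm]
  rw [h2]

theorem psd_ker_sqrt {A : Matrix (Fin k) (Fin k) ℝ} (hA : A.PosSemidef) :
    LinearMap.ker (hA.sqrt).mulVecLin = LinearMap.ker A.mulVecLin := by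
  ext x
  simp only [LinearMap.mem_ker, Matrix.mulVecLin_apply]
  constructor
  · intro h
    conv_lhs => rw [← hA.sqrt_mul_self]
    rw [← Matrix.mulVec_mulVec, h, Matrix.mulVec_zero]
  · intro h
    have h0 : x ⬝ᵥ A *ᵥ x = 0 := by rw [h, dotProduct_zero]
    rw [psd_quadform_sqrt hA] at h0
    exact (dotProduct_self_eq_zero).mp h0
end PSD

theorem key_sub_psd {k : ℕ} {A B : Matrix (Fin k) (Fin k) ℝ} (hA : A.PosSemidef)
    (hB : B.PosSemidef) (hker : LinearMap.ker A.mulVecLin ≤ LinearMap.ker B.mulVecLin) :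
    ∃ ε : ℝ, 0 < ε ∧ (A - ε • B).PosSemidef := by
  have hkerS : LinearMap.ker (hA.sqrt).mulVecLin ≤ LinearMap.ker (hB.sqrt).mulVecLin := by
    rw [psd_ker_sqrt hA, psd_ker_sqrt hB]; exact hker
  obtain ⟨M, hM⟩ := factor_of_ker_le (hA.sqrt).mulVecLin (hB.sqrt).mulVecLin hkerS
  obtain ⟨c, hc0, hc⟩ := exists_bound_dotProduct M
  refine ⟨1 / (c + 1), by positivity, ?_⟩
  refine Matrix.PosSemidef.of_dotProduct_mulVec_nonneg ?_ ?_
  · unfold Matrix.IsHermitian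
    rw [Matrix.conjTranspose_sub, Matrix.conjTranspose_smul, hA.1, hB.1]
    congr 1
  · intro x
    have hstar : star x = x := by simp
    rw [hstar, Matrix.sub_mulVec, dotProduct_sub, Matrix.smul_mulVec,
      dotProduct_smul]
    rw [psd_quadform_sqrt hA, psd_quadform_sqrt hB]
    have h1 : (hB.sqrt *ᵥ x) = M (hA.sqrt *ᵥ x) := by
      have := hM x
      simp only [Matrix.mulVecLin_apply] at this
      exact this.symm
    rw [h1]
    have h2 := hc (hA.sqrt *ᵥ x)
    have h3 : 0 ≤ (hA.sqrt *ᵥ x) ⬝ᵥ (hA.sqrt *ᵥ x) := by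
      have := dotProduct_self_star_nonneg (hA.sqrt *ᵥ x)
      simpa using this
    have h4 : 0 ≤ M (hA.sqrt *ᵥ x) ⬝ᵥ M (hA.sqrt *ᵥ x) := by
      have := dotProduct_self_star_nonneg (M (hA.sqrt *ᵥ x))
      simpa using this
    rw [smul_eq_mul, sub_nonneg, div_mul_eq_mul_div, one_mul, div_le_iff₀ (by positivity)]
    nlinarith

section Faces
variable {k : ℕ}

theorem ker_add_le_left {A B : Matrix (Fin k) (Fin k) ℝ} (hA : A.PosSemidef)
    (hB : B.PosSemidef) :
    LinearMap.ker (A + B).mulVecLin ≤ LinearMap.ker A.mulVecLin := by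
  intro x hx
  simp only [LinearMap.mem_ker, Matrix.mulVecLin_apply] at hx ⊢
  have h0 : x ⬝ᵥ (A + B) *ᵥ x = 0 := by rw [hx, dotProduct_zero]
  rw [Matrix.add_mulVec, dotProduct_add] at h0
  have hA2 := hA.dotProduct_mulVec_nonneg x
  have hB2 := hB.dotProduct_mulVec_nonneg x
  simp only [star_trivial] at hA2 hB2
  have hAx : x ⬝ᵥ A *ᵥ x = 0 := le_antisymm (by linarith) hA2
  have := (hA.dotProduct_mulVec_zero_iff x).mp (by simpa using hAx)
  exact this

abbrev PSDcone (k : ℕ) : Set (Matrix (Fin k) (Fin k) ℝ) := {A | A.PosSemidef}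

/-- scaling: if `c • B ∈ F` for a face `F` and `c > 0`, `B` PSD, then `B ∈ F`. -/
theorem mem_face_of_smul_mem {F : Set (Matrix (Fin k) (Fin k) ℝ)} (hF : IsFace (PSDcone k) F)
    {B : Matrix (Fin k) (Fin k) ℝ} (hB : B.PosSemidef) {c : ℝ} (hc : 0 < c)
    (hcB : c • B ∈ F) : B ∈ F := by
  rcases lt_trichotomy c 1 with h | h | h
  · -- c < 1 : c • B = c • B + (1 - c) • 0
    have h0 : c • B + (1 - c) • (0 : Matrix (Fin k) (Fin k) ℝ) = c • B := by simp
    have := hF.2.2 (x := B) hB (y := 0) (Matrix.PosSemidef.zero) hc h (by rw [h0]; exact hcB)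
    exact this.1
  · rwa [h, one_smul] at hcB
  · -- c > 1 : c • B = (1/2) • B' + (1/2) • B where B' = (2*c - 1) • B
    set α : ℝ := 1 / 2 with hα
    have h0 : α • ((2 * c - 1) • B) + (1 - α) • B = c • B := by
      rw [hα]; module
    have := hF.2.2 (x := (2*c-1) • B) (psd_smul hB (by linarith)) (y := B) hB
      (α := α) (by rw [hα]; norm_num) (by rw [hα]; norm_num) (by rw [h0]; exact hcB)
    exact this.2

/-- Main face absorption: if `A ∈ F` and `B` is PSD with `ker A ≤ ker B`, then `B ∈ F`. -/
theorem mem_face_of_ker_le {F : Set (Matrix (Fin k) (Fin k) ℝ)} (hF : IsFace (PSDcone k) F)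
    {A B : Matrix (Fin k) (Fin k) ℝ} (hAF : A ∈ F) (hB : B.PosSemidef)
    (hker : LinearMap.ker A.mulVecLin ≤ LinearMap.ker B.mulVecLin) : B ∈ F := by
  have hA : A.PosSemidef := hF.1 hAF
  obtain ⟨ε, hε, hsub⟩ := key_sub_psd hA hB hker
  have hcomb : (1/2 : ℝ) • ((2 * ε) • B) + (1 - 1/2 : ℝ) • ((2 : ℝ) • (A - ε • B)) = A := by
    module
  have hx : (2 * ε) • B ∈ PSDcone k := psd_smul hB (by linarith)
  have hy : ((2 : ℝ) • (A - ε • B)) ∈ PSDcone k := psd_smul hsub (by norm_num)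
  have := hF.2.2 hx hy (α := 1/2) (by norm_num) (by norm_num) (by rw [hcomb]; exact hAF)
  exact mem_face_of_smul_mem hF hB (by positivity) this.1

/-- a nonempty face contains a matrix of minimal kernel: its kernel is below all others. -/
theorem exists_min_ker {F : Set (Matrix (Fin k) (Fin k) ℝ)} (hF : IsFace (PSDcone k) F)
    (hne : F.Nonempty) :
    ∃ A ∈ F, ∀ B ∈ F, LinearMap.ker A.mulVecLin ≤ LinearMap.ker B.mulVecLin := by
  classical
  set s : Set ℕ := (fun A : Matrix (Fin k) (Fin k) ℝ =>
    Module.finrank ℝ (LinearMap.ker A.mulVecLin)) '' F with hs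
  have hsne : s.Nonempty := hne.image _
  obtain ⟨A, hAF, hAr⟩ := Nat.sInf_mem hsne
  refine ⟨A, hAF, fun B hBF => ?_⟩
  have hA : A.PosSemidef := hF.1 hAF
  have hB : B.PosSemidef := hF.1 hBF
  -- midpoint C ∈ F
  have hC : (1/2 : ℝ) • A + (1/2 : ℝ) • B ∈ F :=
    hF.2.1 hAF hBF (by norm_num) (by norm_num) (by norm_num)
  set C := (1/2 : ℝ) • A + (1/2 : ℝ) • B with hCdef
  have hCeq : C = (1/2 : ℝ) • (A + B) := by rw [hCdef, smul_add]
  have hkerC : LinearMap.ker C.mulVecLin = LinearMap.ker (A + B).mulVecLin := by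
    rw [hCeq]
    have : ((1/2 : ℝ) • (A + B)).mulVecLin = (1/2 : ℝ) • (A + B).mulVecLin := by
      ext v; simp [Matrix.smul_mulVec]
    rw [this, LinearMap.ker_smul _ _ (by norm_num)]
  have hCA : LinearMap.ker C.mulVecLin ≤ LinearMap.ker A.mulVecLin := by
    rw [hkerC]; exact ker_add_le_left hA hB
  have hCB : LinearMap.ker C.mulVecLin ≤ LinearMap.ker B.mulVecLin := by
    rw [hkerC, add_comm]; exact ker_add_le_left hB hA
  have hmin : Module.finrank ℝ (LinearMap.ker A.mulVecLin)
      ≤ Module.finrank ℝ (LinearMap.ker C.mulVecLin) := by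
    have hAr' : Module.finrank ℝ (LinearMap.ker A.mulVecLin) = sInf s := hAr
    rw [hAr']; exact Nat.sInf_le ⟨C, hC, rfl⟩
  have : LinearMap.ker C.mulVecLin = LinearMap.ker A.mulVecLin :=
    Submodule.eq_of_le_of_finrank_le hCA hmin
  rw [← this]; exact hCB

end Faces

theorem psd_diag_nonneg {k : ℕ} {A : Matrix (Fin k) (Fin k) ℝ} (hA : A.PosSemidef) (p : Fin k) :
    0 ≤ A p p := by
  have := hA.dotProduct_mulVec_nonneg (Pi.single p 1)
  simpa [dotProduct, Matrix.mulVec, Pi.single_apply] using this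

theorem upper_bound (k : ℕ) (l : ℕ) (F : Fin l → Set (Matrix (Fin k) (Fin k) ℝ))
    (hch : IsFaceChain {A : Matrix (Fin k) (Fin k) ℝ | A.PosSemidef} l F) : l ≤ k + 1 := by
  classical
  have hmin := fun i => exists_min_ker (F := F i) ((hch.1 i).1) ((hch.1 i).2)
  choose A hAF hAmin using hmin
  set W : Fin l → Submodule ℝ (Fin k → ℝ) := fun i => LinearMap.ker (A i).mulVecLin with hW
  have hanti : ∀ i j : Fin l, i < j → W j < W i := by
    intro i j hij
    have hss := hch.2 i j hij
    have hle : W j ≤ W i := hAmin j (A i) (hss.1 (hAF i))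
    refine lt_of_le_of_ne hle ?_
    intro heq
    refine hss.2 (fun B hBF => ?_)
    have hBpsd : B.PosSemidef := ((hch.1 j).1).1 hBF
    refine mem_face_of_ker_le ((hch.1 i).1) (hAF i) hBpsd ?_
    calc LinearMap.ker (A i).mulVecLin = W j := heq.symm
      _ ≤ LinearMap.ker B.mulVecLin := hAmin j B hBF
  -- finrank decreasing
  have hrk : ∀ n (h : n < l), Module.finrank ℝ (W ⟨n, h⟩) + n ≤ k := by
    intro n
    induction n with
    | zero =>
      intro h
      have := Submodule.finrank_le (W ⟨0, h⟩)
      simpa [Module.finrank_fin_fun] using this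
    | succ m ih =>
      intro h
      have hm : m < l := Nat.lt_of_succ_lt h
      have hlt : W ⟨m + 1, h⟩ < W ⟨m, hm⟩ := hanti _ _ (by simp [Fin.lt_def])
      have := Submodule.finrank_lt_finrank_of_lt hlt
      have := ih hm
      omega
  rcases Nat.eq_zero_or_pos l with hl | hl
  · omega
  · have := hrk (l - 1) (by omega)
    omega

theorem lower_bound (k : ℕ) (hk : 0 < k) :
    ∃ F : Fin (k + 1) → Set (Matrix (Fin k) (Fin k) ℝ),
      IsFaceChain {A : Matrix (Fin k) (Fin k) ℝ | A.PosSemidef} (k + 1) F := by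
  classical
  refine ⟨fun i => {A | A.PosSemidef ∧ ∀ p : Fin k, (i : ℕ) ≤ (p : ℕ) → A p p = 0}, ?_, ?_⟩
  · intro i
    constructor
    · refine ⟨fun A hA => hA.1, ?_, ?_⟩
      · -- convex
        intro x hx y hy a b ha hb hab
        refine ⟨(psd_smul hx.1 ha).add (psd_smul hy.1 hb), fun p hp => ?_⟩
        simp only [Matrix.add_apply, Matrix.smul_apply, smul_eq_mul]
        rw [hx.2 p hp, hy.2 p hp]
        ring
      · -- face condition
        intro x hx y hy α hα0 hα1 hmem
        have hd := hmem.2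
        have hxd := fun p => psd_diag_nonneg hx p
        have hyd := fun p => psd_diag_nonneg hy p
        constructor
        · refine ⟨hx, fun p hp => ?_⟩
          have := hd p hp
          simp only [Matrix.add_apply, Matrix.smul_apply, smul_eq_mul] at this
          nlinarith [hxd p, hyd p]
        · refine ⟨hy, fun p hp => ?_⟩
          have := hd p hp
          simp only [Matrix.add_apply, Matrix.smul_apply, smul_eq_mul] at this
          nlinarith [hxd p, hyd p]
    · exact ⟨0, Matrix.PosSemidef.zero, fun p _ => rfl⟩
  · intro i j hij
    constructor
    · -- inclusion
      intro A hA
      exact ⟨hA.1, fun p hp => hA.2 p (le_trans (le_of_lt hij) hp)⟩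
    · -- strict
      intro hsub
      have hik : (i : ℕ) < k := lt_of_lt_of_le hij (Nat.lt_succ_iff.mp j.isLt)
      set i' : Fin k := ⟨(i : ℕ), hik⟩ with hi'
      set D : Matrix (Fin k) (Fin k) ℝ :=
        Matrix.diagonal (fun p => if p = i' then (1:ℝ) else 0) with hD
      have hDpsd : D.PosSemidef := Matrix.PosSemidef.diagonal (by
        intro p; dsimp only; split <;> norm_num)
      have hDj : D ∈ {A : Matrix (Fin k) (Fin k) ℝ |
          A.PosSemidef ∧ ∀ p : Fin k, (j : ℕ) ≤ (p : ℕ) → A p p = 0} := by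
        refine ⟨hDpsd, fun p hp => ?_⟩
        rw [hD, Matrix.diagonal_apply_eq]
        have : p ≠ i' := by
          intro hcontra
          rw [hcontra] at hp
          simp only [hi'] at hp
          omega
        simp [this]
      have hDi := hsub hDj
      have := hDi.2 i' (le_refl _)
      rw [hD, Matrix.diagonal_apply_eq] at this
      simp at this

/-- For every positive integer `k`, the maximum length of a chain of
nonempty faces of `S₊ᵏ` equals `k + 1`: every chain of nonempty faces has length at most
`k + 1`, and there is a chain of nonempty faces of length `k + 1`. -/
theorem statement_12 (k : ℕ) (hk : 0 < k) :
    (∀ (l : ℕ) (F : Fin l → Set (Matrix (Fin k) (Fin k) ℝ)),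
      IsFaceChain {A : Matrix (Fin k) (Fin k) ℝ | A.PosSemidef} l F → l ≤ k + 1) ∧
    ∃ F : Fin (k + 1) → Set (Matrix (Fin k) (Fin k) ℝ),
      IsFaceChain {A : Matrix (Fin k) (Fin k) ℝ | A.PosSemidef} (k + 1) F := by
  exact ⟨upper_bound k, lower_bound k hk⟩
end

section
/- For every positive integer k, the cone S₊^{k+1} of (k+1)×(k+1) real symmetric positive semidefinite matrices does not have a (K_1 × ⋯ × K_m)-lift for any positive integer m and closed convex cones K_1, …, K_m satisfying ℓ(K_i) ≤ k+1 for all i ∈ [m]. In particular, S₊^3 has no lift using a finite product of cones each of whose nonempty face chains have length at most 3 (e.g., smooth cones such as second-order cones), and S₊^4 has no lift using a finite product of cones of dimension at most 3. -/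
/-- A closed convex cone (containing the origin). -/
def IsClosedConvexCone {E : Type*} [AddCommGroup E] [Module ℝ E] [TopologicalSpace E]
    (K : Set E) : Prop :=
  IsClosed K ∧ Convex ℝ K ∧ (0 : E) ∈ K ∧ ∀ x ∈ K, ∀ t : ℝ, 0 ≤ t → t • x ∈ K

/-- `FaceChainBound K m` says every chain of nonempty faces of `K` has length at most `m`,
i.e. `ℓ(K) ≤ m`. -/
def FaceChainBound {E : Type*} [AddCommGroup E] [Module ℝ E] (K : Set E) (m : ℕ) : Prop :=
  ∀ (l : ℕ) (F : Fin l → Set E),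
    (∀ i, IsFace K (F i) ∧ (F i).Nonempty) →
    (∀ i j : Fin l, i < j → F i ⊂ F j) → l ≤ m

section Face
variable {E : Type*} [AddCommGroup E] [Module ℝ E] {K : Set E}

/-- the minimal face of `K` containing `p`. -/
def minFaceAt (K : Set E) (p : E) : Set E := {q | q ∈ K ∧ ∃ δ : ℝ, 0 < δ ∧ p - δ • q ∈ K}

lemma cone_add (hconv : Convex ℝ K) (hcone : ∀ x ∈ K, ∀ t : ℝ, 0 ≤ t → t • x ∈ K)
    {a b : E} (ha : a ∈ K) (hb : b ∈ K) : a + b ∈ K := by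
  have h := hconv ha hb (by norm_num : (0:ℝ) ≤ 1/2) (by norm_num : (0:ℝ) ≤ 1/2) (by norm_num)
  have h2 := hcone _ h 2 (by norm_num)
  have heq : (2:ℝ) • ((1/2:ℝ) • a + (1/2:ℝ) • b) = a + b := by
    match_scalars <;> norm_num
  rwa [heq] at h2

lemma shrink (hconv : Convex ℝ K) {p q : E} (hp : p ∈ K) {δ δ' : ℝ} (h0 : 0 < δ)
    (hle : δ ≤ δ') (h : p - δ' • q ∈ K) : p - δ • q ∈ K := by
  have hδ' : 0 < δ' := lt_of_lt_of_le h0 hle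
  have hd : δ / δ' ≤ 1 := by
    rw [div_le_one hδ']; exact hle
  have hc := hconv hp h (a := 1 - δ/δ') (b := δ/δ') (by linarith) (by positivity) (by ring)
  have heq : (1 - δ/δ') • p + (δ/δ') • (p - δ' • q) = p - δ • q := by
    match_scalars <;> field_simp <;> ring
  rwa [heq] at hc

lemma mem_minFaceAt_self {p : E}
    (hcone : ∀ x ∈ K, ∀ t : ℝ, 0 ≤ t → t • x ∈ K) (hp : p ∈ K) : p ∈ minFaceAt K p := by
  refine ⟨hp, 1/2, by norm_num, ?_⟩
  have heq : p - (1/2 : ℝ) • p = (1/2 : ℝ) • p := by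
    match_scalars; norm_num
  rw [heq]; exact hcone _ hp _ (by norm_num)

lemma minFaceAt_mono (hconv : Convex ℝ K) (hcone : ∀ x ∈ K, ∀ t : ℝ, 0 ≤ t → t • x ∈ K)
    {p d : E} (hd : d ∈ K) : minFaceAt K p ⊆ minFaceAt K (p + d) := by
  rintro q ⟨hq, δ, hδ, hmem⟩
  refine ⟨hq, δ, hδ, ?_⟩
  have heq : p + d - δ • q = (p - δ • q) + d := by abel
  rw [heq]; exact cone_add hconv hcone hmem hd

lemma minFaceAt_isFace (hconv : Convex ℝ K) (hcone : ∀ x ∈ K, ∀ t : ℝ, 0 ≤ t → t • x ∈ K)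
    {p : E} (hp : p ∈ K) : IsFace K (minFaceAt K p) := by
  refine ⟨fun q hq => hq.1, ?_, ?_⟩
  · -- convexity
    rintro x ⟨hx, δ₁, hδ₁, h1⟩ y ⟨hy, δ₂, hδ₂, h2⟩ a b ha hb hab
    refine ⟨hconv hx hy ha hb hab, min δ₁ δ₂, lt_min hδ₁ hδ₂, ?_⟩
    have hx' : p - min δ₁ δ₂ • x ∈ K := shrink hconv hp (lt_min hδ₁ hδ₂) (min_le_left _ _) h1
    have hy' : p - min δ₁ δ₂ • y ∈ K := shrink hconv hp (lt_min hδ₁ hδ₂) (min_le_right _ _) h2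
    have hcomb := hconv hx' hy' ha hb hab
    have heq : a • (p - min δ₁ δ₂ • x) + b • (p - min δ₁ δ₂ • y)
        = p - min δ₁ δ₂ • (a • x + b • y) := by
      match_scalars <;> simp [hab] <;> ring_nf <;> nlinarith [hab]
    rwa [heq] at hcomb
  · rintro x hx y hy α hα0 hα1 ⟨hz, δ, hδ, hmem⟩
    constructor
    · refine ⟨hx, δ * α, by positivity, ?_⟩
      have heq : p - (δ * α) • x = (p - δ • (α • x + (1-α) • y)) + (δ * (1-α)) • y := by
        match_scalars <;> ring
      rw [heq]
      exact cone_add hconv hcone hmem (hcone _ hy _ (by nlinarith))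
    · refine ⟨hy, δ * (1-α), by nlinarith, ?_⟩
      have heq : p - (δ * (1-α)) • y = (p - δ • (α • x + (1-α) • y)) + (δ * α) • x := by
        match_scalars <;> ring
      rw [heq]
      exact cone_add hconv hcone hmem (hcone _ hx _ (by positivity))

end Face

theorem infRamsey {C : Type*} [Finite C] (r : ℕ) (f : Finset ℕ → C) (X : Set ℕ)
    (hX : X.Infinite) :
    ∃ Y : Set ℕ, Y ⊆ X ∧ Y.Infinite ∧ ∃ c₀ : C,
      ∀ s : Finset ℕ, ↑s ⊆ Y → s.card = r → f s = c₀ := by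
  classical
  induction r generalizing f X with
  | zero =>
    refine ⟨X, le_refl _, hX, f ∅, fun s _ hs => ?_⟩
    rw [Finset.card_eq_zero.mp hs]
  | succ r IH =>
    -- one-step lemma
    have step : ∀ Z : Set ℕ, Z.Infinite → ∃ x : ℕ × Set ℕ × C,
        x.1 ∈ Z ∧ x.2.1 ⊆ Z \ {x.1} ∧ x.2.1.Infinite ∧
        ∀ s : Finset ℕ, ↑s ⊆ x.2.1 → s.card = r → f (insert x.1 s) = x.2.2 := by
      intro Z hZ
      obtain ⟨a, ha⟩ := hZ.nonempty
      obtain ⟨Y, hYsub, hYinf, c, hc⟩ :=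
        IH (fun s => f (insert a s)) (Z \ {a}) (hZ.diff (Set.finite_singleton a))
      exact ⟨⟨a, Y, c⟩, ha, hYsub, hYinf, hc⟩
    -- iterate
    let g : ℕ → {Z : Set ℕ // Z.Infinite} := fun n =>
      Nat.rec ⟨X, hX⟩ (fun _ Z => ⟨((step Z.1 Z.2).choose).2.1,
        ((step Z.1 Z.2).choose_spec).2.2.1⟩) n
    let a : ℕ → ℕ := fun n => ((step (g n).1 (g n).2).choose).1
    let col : ℕ → C := fun n => ((step (g n).1 (g n).2).choose).2.2
    have hgsucc : ∀ n, (g (n+1)).1 = ((step (g n).1 (g n).2).choose).2.1 := fun n => rfl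
    have ha_mem : ∀ n, a n ∈ (g n).1 := fun n => ((step (g n).1 (g n).2).choose_spec).1
    have hsub : ∀ n, (g (n+1)).1 ⊆ (g n).1 \ {a n} := fun n =>
      ((step (g n).1 (g n).2).choose_spec).2.1
    have hcol : ∀ n, ∀ s : Finset ℕ, ↑s ⊆ (g (n+1)).1 → s.card = r →
        f (insert (a n) s) = col n := fun n =>
      ((step (g n).1 (g n).2).choose_spec).2.2.2
    have hmono : ∀ n l, n ≤ l → (g l).1 ⊆ (g n).1 := by
      intro n l hnl
      induction l with
      | zero => simp_all
      | succ l IH2 =>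
        rcases Nat.eq_or_lt_of_le hnl with h | h
        · rw [h]
        · exact Set.Subset.trans (Set.Subset.trans (hsub l) (Set.diff_subset))
            (IH2 (Nat.lt_succ_iff.mp h))
    have hXg : ∀ n, (g n).1 ⊆ X := fun n => hmono 0 n (Nat.zero_le n)
    have ha_in : ∀ n l, n < l → a l ∈ (g (n+1)).1 := by
      intro n l h
      exact hmono (n+1) l h (ha_mem l)
    have ha_ne : ∀ n l, n < l → a l ≠ a n := by
      intro n l h
      have := hsub n (ha_in n l h)
      simp only [Set.mem_diff, Set.mem_singleton_iff] at this
      exact this.2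
    have ha_inj : Function.Injective a := by
      intro n l h
      by_contra hne
      rcases Nat.lt_or_ge n l with hlt | hge
      · exact ha_ne n l hlt h.symm
      · exact ha_ne l n (lt_of_le_of_ne hge (Ne.symm hne)) h
    -- pigeonhole on colors
    obtain ⟨c₀, hc₀⟩ := Finite.exists_infinite_fiber col
    have hJ : (col ⁻¹' {c₀}).Infinite := Set.infinite_coe_iff.mp hc₀
    refine ⟨a '' (col ⁻¹' {c₀}), ?_, hJ.image (ha_inj.injOn), c₀, ?_⟩
    · rintro y ⟨n, _, rfl⟩
      exact hXg n (ha_mem n)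
    · intro s hsY hcard
      -- pick indices
      have hex : ∀ v ∈ s, ∃ n, col n = c₀ ∧ a n = v := by
        intro v hv
        obtain ⟨n, hn, rfl⟩ := hsY hv
        exact ⟨n, hn, rfl⟩
      choose nf hnf1 hnf2 using hex
      have hsne : s.Nonempty := Finset.card_pos.mp (by omega)
      let I : Finset ℕ := s.attach.image (fun v => nf v.1 v.2)
      have hIne : I.Nonempty := (Finset.attach_nonempty_iff.mpr hsne).image _
      let n₀ := I.min' hIne
      have hn₀I : n₀ ∈ I := I.min'_mem hIne
      obtain ⟨v₀, hv₀s, hv₀⟩ : ∃ v₀, ∃ h : v₀ ∈ s, nf v₀ h = n₀ := by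
        obtain ⟨⟨v, hv⟩, _, h⟩ := Finset.mem_image.mp hn₀I
        exact ⟨v, hv, h⟩
      have hva : a n₀ = v₀ := by rw [← hv₀]; exact hnf2 v₀ hv₀s
      have hrest : ↑(s.erase v₀) ⊆ (g (n₀+1)).1 := by
        intro v hv
        rw [Finset.coe_erase] at hv
        obtain ⟨hvs, hvne⟩ := hv
        have hvne' : v ≠ v₀ := hvne
        have hnv : nf v hvs ∈ I := Finset.mem_image.mpr ⟨⟨v, hvs⟩, Finset.mem_attach _ _, rfl⟩
        have hge : n₀ ≤ nf v hvs := I.min'_le _ hnv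
        have hlt : n₀ < nf v hvs := by
          rcases Nat.eq_or_lt_of_le hge with h | h
          · exfalso; apply hvne'
            rw [← hnf2 v hvs, ← h, hva]
          · exact h
        have := ha_in n₀ (nf v hvs) hlt
        rwa [hnf2 v hvs] at this
      have hcard' : (s.erase v₀).card = r := by
        rw [Finset.card_erase_of_mem hv₀s, hcard]; omega
      have heq : f s = f (insert (a n₀) (s.erase v₀)) := by
        rw [hva, Finset.insert_erase hv₀s]
      rw [heq, hcol n₀ _ hrest hcard']
      rw [← hv₀]; exact hnf1 v₀ hv₀s

open Polynomial in
lemma moment_orth (k : ℕ) (I : Finset ℕ) (hI : I.card ≤ k) (t₀ : ℕ) (ht : t₀ ∉ I) :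
    ∃ c : Fin (k+1) → ℝ, (∀ t ∈ I, ∑ a : Fin (k+1), (t:ℝ)^(a:ℕ) * c a = 0) ∧
      ∑ a : Fin (k+1), (t₀:ℝ)^(a:ℕ) * c a ≠ 0 := by
  set p : Polynomial ℝ := ∏ t ∈ I, (X - C (t:ℝ)) with hp
  have hdeg : p.natDegree < k + 1 := by
    have h1 : p.natDegree ≤ ∑ t ∈ I, (X - C (t:ℝ)).natDegree := natDegree_prod_le _ _
    have h2 : ∑ t ∈ I, (X - C (t:ℝ)).natDegree = I.card := by
      simp only [natDegree_X_sub_C]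
      simp
    omega
  have key : ∀ s : ℝ, ∑ a : Fin (k+1), s^(a:ℕ) * p.coeff a = p.eval s := by
    intro s
    rw [eval_eq_sum_range' hdeg]
    rw [Fin.sum_univ_eq_sum_range (fun n => s^n * p.coeff n) (k+1)]
    exact Finset.sum_congr rfl (fun i _ => mul_comm _ _)
  refine ⟨fun a => p.coeff a, fun t htI => ?_, ?_⟩
  · rw [key]
    rw [hp, eval_prod]
    exact Finset.prod_eq_zero htI (by simp)
  · rw [key, hp, eval_prod]
    rw [Finset.prod_ne_zero_iff]
    intro t htI
    simp only [eval_sub, eval_X, eval_C, sub_ne_zero]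
    exact Nat.cast_injective.ne (fun h => ht (h ▸ htI))

lemma quad_vecMulVec {N : ℕ} (v x : Fin N → ℝ) :
    dotProduct x ((Matrix.vecMulVec v v).mulVec x) = (∑ a, v a * x a)^2 := by
  have h1 : ∀ i, (Matrix.vecMulVec v v).mulVec x i = v i * (∑ j, v j * x j) := by
    intro i
    simp only [Matrix.mulVec, Matrix.vecMulVec_apply, dotProduct]
    rw [Finset.mul_sum]
    exact Finset.sum_congr rfl (fun j _ => by ring)
  unfold dotProduct
  calc ∑ i, x i * ((Matrix.vecMulVec v v).mulVec x i)
      = ∑ i, (v i * x i) * (∑ j, v j * x j) := by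
        refine Finset.sum_congr rfl (fun i _ => ?_)
        rw [h1 i]; ring
    _ = (∑ i, v i * x i) * (∑ j, v j * x j) := by rw [← Finset.sum_mul]
    _ = (∑ a, v a * x a)^2 := by rw [sq]

lemma vecMulVec_posSemidef {N : ℕ} (v : Fin N → ℝ) : (Matrix.vecMulVec v v).PosSemidef := by
  refine Matrix.posSemidef_iff_dotProduct_mulVec.mpr ⟨?_, ?_⟩
  · ext i j
    simp [Matrix.conjTranspose_apply, Matrix.vecMulVec_apply, mul_comm]
  · intro x
    rw [star_trivial, quad_vecMulVec]
    positivity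

noncomputable def quadF {N : ℕ} (c : Fin N → ℝ) : Matrix (Fin N) (Fin N) ℝ →ₗ[ℝ] ℝ where
  toFun := fun A => dotProduct c (A.mulVec c)
  map_add' := by
    intro A B
    show dotProduct c ((A + B).mulVec c) = _
    rw [Matrix.add_mulVec, dotProduct_add]
  map_smul' := by
    intro s A
    show dotProduct c ((s • A).mulVec c) = _
    rw [Matrix.smul_mulVec, dotProduct_smul]
    rfl

/-- For every positive integer `k`, the cone `S₊^{k+1}` has no
`K₁ × ⋯ × Kₘ`-lift for any positive integer `m` and closed convex cones `K₁, …, Kₘ` with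
`ℓ(Kᵢ) ≤ k + 1` for all `i`. -/
theorem statement_15 (k : ℕ) (hk : 0 < k) (m : ℕ) (hm : 0 < m) (d : Fin m → ℕ)
    (K : ∀ i : Fin m, Set (EuclideanSpace ℝ (Fin (d i))))
    (hK : ∀ i, IsClosedConvexCone (K i))
    (hKl : ∀ i, FaceChainBound (K i) (k + 1)) :
    ¬ ∃ (π : (∀ i, EuclideanSpace ℝ (Fin (d i))) →ₗ[ℝ] Matrix (Fin (k + 1)) (Fin (k + 1)) ℝ)
        (L : Submodule ℝ (∀ i, EuclideanSpace ℝ (Fin (d i)))),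
        {A : Matrix (Fin (k + 1)) (Fin (k + 1)) ℝ | A.PosSemidef} =
          π '' ({x | ∀ i, x i ∈ K i} ∩ (L : Set (∀ i, EuclideanSpace ℝ (Fin (d i))))) := by
  classical
  rintro ⟨π, L, hEq⟩
  -- cone data
  have hconv : ∀ i, Convex ℝ (K i) := fun i => (hK i).2.1
  have h0K : ∀ i, (0 : EuclideanSpace ℝ (Fin (d i))) ∈ K i := fun i => (hK i).2.2.1
  have hcone : ∀ i, ∀ x ∈ K i, ∀ t : ℝ, 0 ≤ t → t • x ∈ K i := fun i => (hK i).2.2.2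
  -- moment curve and rank one matrices
  set pts : ℕ → (Fin (k+1) → ℝ) := fun t a => (t:ℝ)^(a:ℕ) with hpts
  set M : ℕ → Matrix (Fin (k+1)) (Fin (k+1)) ℝ := fun t => Matrix.vecMulVec (pts t) (pts t)
    with hM
  have hMpsd : ∀ t, (M t).PosSemidef := fun t => vecMulVec_posSemidef _
  have hmem_psd : ∀ w : (∀ i, EuclideanSpace ℝ (Fin (d i))),
      (∀ i, w i ∈ K i) → w ∈ L → (π w).PosSemidef := by
    intro w h1 h2
    have : π w ∈ {A : Matrix (Fin (k + 1)) (Fin (k + 1)) ℝ | A.PosSemidef} := by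
      rw [hEq]; exact ⟨w, ⟨h1, h2⟩, rfl⟩
    exact this
  have hlift : ∀ t, ∃ v : (∀ i, EuclideanSpace ℝ (Fin (d i))),
      (∀ i, v i ∈ K i) ∧ v ∈ L ∧ π v = M t := by
    intro t
    have : M t ∈ {A : Matrix (Fin (k + 1)) (Fin (k + 1)) ℝ | A.PosSemidef} := hMpsd t
    rw [hEq] at this
    obtain ⟨v, ⟨h1, h2⟩, h3⟩ := this
    exact ⟨v, h1, h2, h3⟩
  choose u hu1 hu2 hu3 using hlift
  -- sums of lifts
  set US : Finset ℕ → ∀ i, EuclideanSpace ℝ (Fin (d i)) := fun S => ∑ t ∈ S, u t with hUS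
  have hUSapp : ∀ S i, US S i = ∑ t ∈ S, u t i := by
    intro S i; exact Finset.sum_apply i S u
  have hUSK : ∀ S i, US S i ∈ K i := by
    intro S i
    rw [hUSapp]
    exact Finset.sum_induction _ (· ∈ K i)
      (fun a b ha hb => cone_add (hconv i) (hcone i) ha hb) (h0K i) (fun t _ => hu1 t i)
  have hUSL : ∀ S, US S ∈ L := fun S => Submodule.sum_mem L (fun t _ => hu2 t)
  have hπUS : ∀ S, π (US S) = ∑ t ∈ S, M t := by
    intro S
    rw [hUS]
    rw [map_sum]
    exact Finset.sum_congr rfl fun t _ => hu3 t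
  -- the faces
  set Ff : ∀ i : Fin m, Finset ℕ → Set (EuclideanSpace ℝ (Fin (d i))) :=
    fun i S => minFaceAt (K i) (US S i) with hFf
  have hFface : ∀ i S, IsFace (K i) (Ff i S) :=
    fun i S => minFaceAt_isFace (hconv i) (hcone i) (hUSK S i)
  have hFne : ∀ i S, (Ff i S).Nonempty :=
    fun i S => ⟨US S i, mem_minFaceAt_self (hcone i) (hUSK S i)⟩
  have hFmono : ∀ i (S T : Finset ℕ), S ⊆ T → Ff i S ⊆ Ff i T := by
    intro i S T hST
    have hTeq : US T i = US S i + US (T \ S) i := by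
      rw [hUSapp, hUSapp, hUSapp, ← Finset.sum_sdiff hST, add_comm]
    show minFaceAt (K i) (US S i) ⊆ minFaceAt (K i) (US T i)
    rw [hTeq]
    exact minFaceAt_mono (hconv i) (hcone i) (hUSK (T \ S) i)
  -- key witness lemma
  have hwit : ∀ (S : Finset ℕ) (t₀ : ℕ), S.card ≤ k → t₀ ∉ S → ∃ i, u t₀ i ∉ Ff i S := by
    intro S t₀ hcard ht₀
    by_contra hcon
    push_neg at hcon
    have hδ : ∀ i, ∃ δ : ℝ, 0 < δ ∧ US S i - δ • u t₀ i ∈ K i := fun i => (hcon i).2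
    choose δf hδpos hδmem using hδ
    have hmne : (Finset.univ : Finset (Fin m)).Nonempty := ⟨⟨0, hm⟩, Finset.mem_univ _⟩
    set δ := Finset.univ.inf' hmne δf with hδdef
    have hδ0 : 0 < δ := by
      rw [hδdef, Finset.lt_inf'_iff]; exact fun i _ => hδpos i
    set w := US S - δ • u t₀ with hw
    have hwi : ∀ i, w i ∈ K i := by
      intro i
      have hwieq : w i = US S i - δ • u t₀ i := rfl
      rw [hwieq]
      exact shrink (hconv i) (hUSK S i) hδ0 (Finset.inf'_le _ (Finset.mem_univ i)) (hδmem i)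
    have hwL : w ∈ L := Submodule.sub_mem L (hUSL S) (Submodule.smul_mem L δ (hu2 t₀))
    have hpsd := hmem_psd w hwi hwL
    have hπw : π w = (∑ t ∈ S, M t) - δ • M t₀ := by
      rw [hw, map_sub, map_smul, hπUS, hu3]
    obtain ⟨c, hcI, hct₀⟩ := moment_orth k S hcard t₀ ht₀
    have h0le : (0:ℝ) ≤ dotProduct c ((π w).mulVec c) := by
      have := hpsd.dotProduct_mulVec_nonneg c
      rwa [star_trivial] at this
    have hval : dotProduct c ((π w).mulVec c)
        = - (δ * (∑ a : Fin (k+1), (t₀:ℝ)^(a:ℕ) * c a)^2) := by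
      have hQ : dotProduct c ((π w).mulVec c) = quadF c (π w) := rfl
      rw [hQ, hπw, map_sub, map_smul, map_sum]
      have h1 : ∀ t ∈ S, quadF c (M t) = 0 := by
        intro t htS
        have : quadF c (M t) = (∑ a : Fin (k+1), (t:ℝ)^(a:ℕ) * c a)^2 := quad_vecMulVec _ _
        rw [this, hcI t htS]
        ring
      rw [Finset.sum_congr rfl h1, Finset.sum_const_zero]
      have h2 : quadF c (M t₀) = (∑ a : Fin (k+1), (t₀:ℝ)^(a:ℕ) * c a)^2 := quad_vecMulVec _ _
      rw [h2, smul_eq_mul]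
      ring
    have hpos : 0 < (∑ a : Fin (k+1), (t₀:ℝ)^(a:ℕ) * c a)^2 := by positivity
    rw [hval] at h0le
    nlinarith
  -- step membership
  have hstep : ∀ (A : Finset ℕ) (t : ℕ), t ∉ A → ∀ i, u t i ∈ Ff i (insert t A) := by
    intro A t ht i
    refine ⟨hu1 t i, 1, one_pos, ?_⟩
    have hins : US (insert t A) i = u t i + US A i := by
      rw [hUSapp, Finset.sum_insert ht, hUSapp]
    rw [hins, one_smul, add_sub_cancel_left]
    exact hUSK A i
  -- Ramsey coloring
  set fcol : Finset ℕ → Finset (Fin m) := fun T =>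
    if hT : T.Nonempty then
      Finset.univ.filter (fun i => u (T.max' hT) i ∉ Ff i (T.erase (T.max' hT)))
    else ∅ with hfcol
  obtain ⟨Y, hYuniv, hYinf, c₀, hhom⟩ := infRamsey (k+1) fcol Set.univ Set.infinite_univ
  have hYset : {x : ℕ | x ∈ Y}.Infinite := by rwa [Set.setOf_mem_eq]
  set e : ℕ → ℕ := Nat.nth (· ∈ Y) with he
  have he_mono : StrictMono e := Nat.nth_strictMono hYset
  have he_mem : ∀ j, e j ∈ Y := fun j => Nat.nth_mem_of_infinite hYset j
  have he_inj : Function.Injective e := he_mono.injective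
  -- index sets
  set N := k + 1 with hN
  set idxA : ℕ → Finset ℕ := fun j => (Finset.range j).image (fun l => (l+1) * N) with hidxA
  set idxS : ℕ → Finset ℕ :=
    fun j => idxA j ∪ (Finset.range (k - j)).image (fun r => j * N + 1 + r) with hidxS
  set idxT : ℕ → Finset ℕ := fun j => insert ((j+1) * N) (idxS j) with hidxT
  have hNpos : 0 < N := by omega
  have hmemA : ∀ j x, x ∈ idxA j ↔ ∃ l < j, (l+1) * N = x := by
    intro j x; simp [hidxA]
  have hmemS : ∀ j x, x ∈ idxS j ↔
      ((∃ l < j, (l+1) * N = x) ∨ ∃ r < k - j, j * N + 1 + r = x) := by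
    intro j x; simp [hidxS, hidxA]
  have hA_le : ∀ j x, x ∈ idxA j → x ≤ j * N := by
    intro j x hx
    obtain ⟨l, hl, rfl⟩ := (hmemA j x).mp hx
    exact Nat.mul_le_mul_right N hl
  have hS_lt : ∀ j x, x ∈ idxS j → x < (j+1) * N := by
    intro j x hx
    rcases (hmemS j x).mp hx with ⟨l, hl, rfl⟩ | ⟨r, hr, rfl⟩
    · calc (l+1) * N ≤ j * N := Nat.mul_le_mul_right N hl
        _ < (j+1) * N := by nlinarith
    · have : j * N + 1 + r < j * N + N := by omega
      calc j * N + 1 + r < j * N + N := this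
        _ = (j+1) * N := by ring
  have hAsubS : ∀ j, idxA j ⊆ idxS j := fun j => Finset.subset_union_left
  have hcardA : ∀ j, (idxA j).card = j := by
    intro j
    rw [hidxA]
    rw [Finset.card_image_of_injective _ (fun a b h => by
      have := Nat.eq_of_mul_eq_mul_right hNpos h; omega)]
    exact Finset.card_range j
  have hcardS : ∀ j, j ≤ k → (idxS j).card = k := by
    intro j hj
    rw [hidxS]
    have hdisj : Disjoint (idxA j)
        ((Finset.range (k - j)).image (fun r => j * N + 1 + r)) := by
      rw [Finset.disjoint_left]
      intro x hx hx2
      have h1 := hA_le j x hx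
      simp only [Finset.mem_image, Finset.mem_range] at hx2
      obtain ⟨r, _, rfl⟩ := hx2
      omega
    rw [Finset.card_union_of_disjoint hdisj, hcardA]
    rw [Finset.card_image_of_injective _ (fun a b h => by omega), Finset.card_range]
    omega
  have hTnotmem : ∀ j, (j+1) * N ∉ idxS j := by
    intro j hmem
    exact lt_irrefl _ (hS_lt j _ hmem)
  have hcardT : ∀ j, j ≤ k → (idxT j).card = k + 1 := by
    intro j hj
    rw [hidxT]
    rw [Finset.card_insert_of_notMem (hTnotmem j), hcardS j hj]
  -- finsets of points
  set Af : ℕ → Finset ℕ := fun j => (idxA j).image e with hAf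
  set Sf : ℕ → Finset ℕ := fun j => (idxS j).image e with hSf
  set Tf : ℕ → Finset ℕ := fun j => (idxT j).image e with hTf
  set z : ℕ → ℕ := fun j => e (j * N) with hz
  have hTf_ins : ∀ j, Tf j = insert (z (j+1)) (Sf j) := by
    intro j
    simp only [hTf, hidxT, Finset.image_insert]
    rfl
  have hz_notS : ∀ j, z (j+1) ∉ Sf j := by
    intro j hmem
    rw [hSf] at hmem
    simp only [Finset.mem_image] at hmem
    obtain ⟨y, hy, hey⟩ := hmem
    exact hTnotmem j (he_inj hey ▸ hy)
  have hz_notA : ∀ j, z (j+1) ∉ Af j := by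
    intro j hmem
    exact hz_notS j (Finset.mem_of_subset (Finset.image_subset_image (hAsubS j)) hmem)
  have hTne : ∀ j, (Tf j).Nonempty := by
    intro j
    rw [hTf_ins j]; exact Finset.insert_nonempty _ _
  have hTmax : ∀ j, j ≤ k → (Tf j).max' (hTne j) = z (j+1) := by
    intro j hj
    apply le_antisymm
    · apply Finset.max'_le
      intro x hx
      rw [hTf_ins j] at hx
      rcases Finset.mem_insert.mp hx with rfl | hx
      · exact le_refl _
      · rw [hSf] at hx
        simp only [Finset.mem_image] at hx
        obtain ⟨y, hy, rfl⟩ := hx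
        exact (he_mono.le_iff_le).mpr (le_of_lt (hS_lt j y hy))
    · exact Finset.le_max' _ _ (by rw [hTf_ins j]; exact Finset.mem_insert_self _ _)
  have hTerase : ∀ j, (Tf j).erase (z (j+1)) = Sf j := by
    intro j
    rw [hTf_ins j, Finset.erase_insert (hz_notS j)]
  have hTsubY : ∀ j, ↑(Tf j) ⊆ Y := by
    intro j x hx
    rw [hTf] at hx
    simp only [Finset.coe_image, Set.mem_image, Finset.mem_coe] at hx
    obtain ⟨y, _, rfl⟩ := hx
    exact he_mem y
  have hTcard : ∀ j, j ≤ k → (Tf j).card = k + 1 := by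
    intro j hj
    rw [hTf, Finset.card_image_of_injective _ he_inj, hcardT j hj]
  -- the color is constant
  have hcolT : ∀ j, j ≤ k → fcol (Tf j) = c₀ := by
    intro j hj
    exact hhom (Tf j) (Set.Subset.trans (hTsubY j) (le_refl _)) (hTcard j hj)
  have hcol_iff : ∀ j, j ≤ k → ∀ i, i ∈ c₀ ↔ u (z (j+1)) i ∉ Ff i (Sf j) := by
    intro j hj i
    rw [← hcolT j hj, hfcol]
    simp only [dif_pos (hTne j)]
    rw [Finset.mem_filter]
    rw [hTmax j hj, hTerase j]
    simp
  -- c₀ is nonempty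
  have hSfcard : ∀ j, j ≤ k → (Sf j).card = k := by
    intro j hj
    rw [hSf, Finset.card_image_of_injective _ he_inj, hcardS j hj]
  obtain ⟨i₀, hi₀⟩ : c₀.Nonempty := by
    obtain ⟨i, hi⟩ := hwit (Sf 0) (z 1) (le_of_eq (hSfcard 0 (by omega))) (hz_notS 0)
    exact ⟨i, (hcol_iff 0 (by omega) i).mpr hi⟩
  -- the chain
  have hkey : ∀ j, j ≤ k → u (z (j+1)) i₀ ∉ Ff i₀ (Sf j) :=
    fun j hj => (hcol_iff j hj i₀).mp hi₀
  have hAf_sub_Sf : ∀ j, Af j ⊆ Sf j := fun j => Finset.image_subset_image (hAsubS j)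
  have hkeyA : ∀ j, j ≤ k → u (z (j+1)) i₀ ∉ Ff i₀ (Af j) := by
    intro j hj hmem
    exact hkey j hj (hFmono i₀ (Af j) (Sf j) (hAf_sub_Sf j) hmem)
  have hAf_succ : ∀ j, Af (j+1) = insert (z (j+1)) (Af j) := by
    intro j
    simp only [hAf, hidxA]
    rw [Finset.range_add_one, Finset.image_insert, Finset.image_insert]
  have hmemA_succ : ∀ j, u (z (j+1)) i₀ ∈ Ff i₀ (Af (j+1)) := by
    intro j
    rw [hAf_succ j]
    exact hstep (Af j) (z (j+1)) (hz_notA j) i₀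
  have hAf_mono : ∀ a b : ℕ, a ≤ b → Af a ⊆ Af b := by
    intro a b hab
    apply Finset.image_subset_image
    apply Finset.image_subset_image
    exact Finset.range_subset_range.mpr hab
  -- assemble the chain of faces
  set G : Fin (k+2) → Set (EuclideanSpace ℝ (Fin (d i₀))) := fun j => Ff i₀ (Af (j : ℕ))
    with hG
  have hchain : ∀ a b : Fin (k+2), a < b → G a ⊂ G b := by
    intro a b hab
    have hanat : (a : ℕ) < (b : ℕ) := hab
    have hbk : (b : ℕ) < k + 2 := b.isLt
    have hak : (a : ℕ) ≤ k := by omega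
    have hble : (a : ℕ) + 1 ≤ (b : ℕ) := hanat
    have hsub : G a ⊆ G b := hFmono i₀ _ _ (hAf_mono _ _ (le_of_lt hanat))
    rw [Set.ssubset_iff_of_subset hsub]
    refine ⟨u (z ((a : ℕ)+1)) i₀, ?_, hkeyA (a : ℕ) hak⟩
    exact hFmono i₀ _ _ (hAf_mono _ _ hble) (hmemA_succ (a : ℕ))
  have hlen := hKl i₀ (k+2) G (fun j => ⟨hFface i₀ (Af (j : ℕ)), hFne i₀ (Af (j : ℕ))⟩) hchain
  omega
end
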